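/- Let f(w) = 1/(1 − |w|²) on the open unit disk of ℂ. Then the determinant of the 2×2 matrix [[f, ∂f/∂w], [∂f/∂w̄, ∂²f/∂w̄∂w + f³]] equals 2/(1 − |w|²)⁴ at every point of the unit disk. -/

import Mathlib

/-- The Wirtinger derivative `∂f/∂w = (1/2)(∂f/∂x − i ∂f/∂y)`. -/
noncomputable def wdw (f : ℂ → ℂ) (z : ℂ) : ℂ :=
  (2 : ℂ)⁻¹ * (fderiv ℝ f z 1 - Complex.I * fderiv ℝ f z Complex.I)

/-- The Wirtinger derivative `∂f/∂w̄ = (1/2)(∂f/∂x + i ∂f/∂y)`. -/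
noncomputable def wdwbar (f : ℂ → ℂ) (z : ℂ) : ℂ :=
  (2 : ℂ)⁻¹ * (fderiv ℝ f z 1 + Complex.I * fderiv ℝ f z Complex.I)

/-- The function `f(w) = 1/(1 − |w|²) = 1/(1 − w w̄)` on the unit disk. -/
noncomputable def fGram : ℂ → ℂ := fun z => (1 - z * (starRingEnd ℂ) z)⁻¹



open Complex ContinuousLinearMap

lemma g_ne (z : ℂ) (hz : ‖z‖ < 1) : 1 - z * (starRingEnd ℂ) z ≠ 0 := by
  rw [Complex.mul_conj]
  have h1 : Complex.normSq z < 1 := by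
    have := Complex.sq_norm z
    nlinarith [norm_nonneg z]
  intro h
  have := congrArg Complex.re h
  simp at this
  linarith

/-- derivative of `z ↦ 1 - z * conj z` -/
lemma hasFDerivAt_g (z : ℂ) :
    HasFDerivAt (fun z : ℂ => 1 - z * (starRingEnd ℂ) z)
      (-(z • (Complex.conjCLE : ℂ →L[ℝ] ℂ) + (ContinuousLinearMap.id ℝ ℂ).smulRight ((starRingEnd ℂ) z))) z := by
  have h1 : HasFDerivAt (fun z : ℂ => z * (starRingEnd ℂ) z)
      (z • (Complex.conjCLE : ℂ →L[ℝ] ℂ) + (ContinuousLinearMap.id ℝ ℂ).smulRight ((starRingEnd ℂ) z)) z := by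
    have := (hasFDerivAt_id z).mul' (Complex.conjCLE.hasFDerivAt (x := z))
    exact this
  simpa using h1.const_sub 1

lemma hasFDerivAt_fGram (z : ℂ) (hz : ‖z‖ < 1) :
    HasFDerivAt fGram
      ((-mulLeftRight ℝ ℂ (1 - z * (starRingEnd ℂ) z)⁻¹ (1 - z * (starRingEnd ℂ) z)⁻¹).comp
        (-(z • (Complex.conjCLE : ℂ →L[ℝ] ℂ) + (ContinuousLinearMap.id ℝ ℂ).smulRight ((starRingEnd ℂ) z)))) z := by
  exact (hasFDerivAt_inv' (g_ne z hz)).comp z (hasFDerivAt_g z)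

lemma wdw_fGram (z : ℂ) (hz : ‖z‖ < 1) :
    wdw fGram z = (starRingEnd ℂ) z * ((1 - z * (starRingEnd ℂ) z)^2)⁻¹ := by
  have h := (hasFDerivAt_fGram z hz).fderiv
  rw [wdw, h]
  simp [mulLeftRight_apply, Complex.conjCLE_apply, smul_eq_mul]
  have hg := g_ne z hz
  field_simp
  ring_nf
  simp only [Complex.I_sq]
  ring

lemma wdwbar_fGram (z : ℂ) (hz : ‖z‖ < 1) :
    wdwbar fGram z = z * ((1 - z * (starRingEnd ℂ) z)^2)⁻¹ := by
  have h := (hasFDerivAt_fGram z hz).fderiv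
  rw [wdwbar, h]
  simp [mulLeftRight_apply, Complex.conjCLE_apply, smul_eq_mul]
  have hg := g_ne z hz
  field_simp
  ring_nf
  simp only [Complex.I_sq]
  ring


noncomputable def Hf : ℂ → ℂ := fun z => (starRingEnd ℂ) z * (fGram z * fGram z)

set_option maxHeartbeats 1000000 in
lemma wdwbar_Hf (z : ℂ) (hz : ‖z‖ < 1) :
    wdwbar Hf z = (1 + z * (starRingEnd ℂ) z) * ((1 - z * (starRingEnd ℂ) z)^3)⁻¹ := by
  have h1 := (Complex.conjCLE.hasFDerivAt (x := z)).mul'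
    ((hasFDerivAt_fGram z hz).mul' (hasFDerivAt_fGram z hz))
  have h : fderiv ℝ Hf z = _ := h1.fderiv
  rw [wdwbar, h]
  have hg := g_ne z hz
  simp [mulLeftRight_apply, Complex.conjCLE_apply, smul_eq_mul, fGram]
  rw [← inv_pow]
  have h1 : (1 - z * (starRingEnd ℂ) z)⁻¹ * (1 - z * (starRingEnd ℂ) z) = 1 := inv_mul_cancel₀ hg
  set c := (starRingEnd ℂ) z
  set t := (1 - z * c)⁻¹ with ht
  linear_combination (2⁻¹*(2*c^2*t^3 - 2*c*z*t^3 - t^2)) * Complex.I_sq + (-t^2) * h1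

lemma wdw_eq_Hf : ∀ z : ℂ, ‖z‖ < 1 → wdw fGram z = Hf z := by
  intro z hz
  rw [wdw_fGram z hz, Hf, fGram]
  rw [sq, mul_inv]

/-- For `f(w) = 1/(1 − |w|²)`, the determinant of
`[[f, ∂f/∂w], [∂f/∂w̄, ∂²f/∂w̄∂w + f³]]` equals `2/(1 − |w|²)⁴` on the unit disk. -/
theorem stmt9 (w : ℂ) (hw : ‖w‖ < 1) :
    Matrix.det
      !![fGram w, wdw fGram w;
         wdwbar fGram w, wdwbar (fun z => wdw fGram z) w + (fGram w) ^ 3]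
      = 2 / (1 - w * (starRingEnd ℂ) w) ^ 4 := by
  have heq : (fun z => wdw fGram z) =ᶠ[nhds w] Hf := by
    have hb : Metric.ball (0:ℂ) 1 ∈ nhds w :=
      Metric.isOpen_ball.mem_nhds (by simpa [Metric.mem_ball, Complex.dist_eq] using hw)
    filter_upwards [hb] with z hz
    exact wdw_eq_Hf z (by simpa [Metric.mem_ball, Complex.dist_eq] using hz)
  have h2 : wdwbar (fun z => wdw fGram z) w = wdwbar Hf w := by
    rw [wdwbar, wdwbar, heq.fderiv_eq]
  rw [h2, wdwbar_Hf w hw, wdw_fGram w hw, wdwbar_fGram w hw,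
    Matrix.det_fin_two_of, fGram]
  have hg := g_ne w hw
  have h1 : (1 - w * (starRingEnd ℂ) w)⁻¹ * (1 - w * (starRingEnd ℂ) w) = 1 := inv_mul_cancel₀ hg
  rw [div_eq_mul_inv, ← inv_pow, ← inv_pow, ← inv_pow]
  ring
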